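/- Endow {0,?,1} with the total order 0 ≺ ? ≺ 1 and {0,?,1}^ℤ with the coordinatewise order. Let η, η̃ ∈ {0,?,1}^ℤ satisfy η(x) ⪯ η̃(x) for all x. Then for each n ∈ ℤ, the random variable F̂_{p,q}η(n) stochastically dominates F̂_{p,q}η̃(n) with respect to ≺; i.e., Prob[F̂η̃(n) ⪰ a] ≤ Prob[F̂η(n) ⪰ a] for each a ∈ {0,?,1}. -/

import Mathlib

open MeasureTheory

inductive PSym : Type
  | zero : PSym
  | quest : PSym
  | one : PSym
deriving DecidableEq

instance : Fintype PSym :=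
  ⟨{PSym.zero, PSym.quest, PSym.one}, fun x => by cases x <;> simp⟩

instance : MeasurableSpace PSym := ⊤

abbrev Config : Type := ℤ → PSym

open PSym

/-- the symbol lies in `{0, ?}` -/
def lowQ (a : PSym) : Prop := a = PSym.zero ∨ a = PSym.quest

instance : DecidablePred lowQ := fun a => by unfold lowQ; infer_instance

/-- the window `(η k, η (k+1))` lies in `{0,?}² \ {(0,0)}` -/
def star2 (η : Config) (k : ℤ) : Prop :=
  lowQ (η k) ∧ lowQ (η (k + 1)) ∧ ¬(η k = PSym.zero ∧ η (k + 1) = PSym.zero)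

/-- the window `(η k, η (k+1), η (k+2))` lies in `{0,?}³ \ {(0,0,0)}` -/
def star3 (η : Config) (k : ℤ) : Prop :=
  lowQ (η k) ∧ lowQ (η (k + 1)) ∧ lowQ (η (k + 2)) ∧
    ¬(η k = PSym.zero ∧ η (k + 1) = PSym.zero ∧ η (k + 2) = PSym.zero)

/-- translation by `k` -/
def shiftBy (k : ℤ) (η : Config) : Config := fun n => η (n + k)

/-- reflection -/
def reflect (η : Config) : Config := fun n => η (-n)

/-- the single-site stochastic update rule of the envelope PCA `F̂_{p,q}`:
`phi p q a b c d` is the probability that the output symbol is `d` when the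
neighbourhood reads `(a, b, c)`. -/
noncomputable def phi (p q : ℝ) (a b c d : PSym) : ℝ :=
  if a = PSym.zero ∧ b = PSym.zero ∧ c = PSym.zero then
    (if d = PSym.zero then p else if d = PSym.one then 1 - p else 0)
  else if lowQ a ∧ lowQ b ∧ lowQ c then
    (if d = PSym.zero then p else if d = PSym.one then q else 1 - p - q)
  else
    (if d = PSym.zero then 1 - q else if d = PSym.one then q else 0)

/-- the total order `0 ≺ ? ≺ 1` encoded via a rank function -/
def ordVal : PSym → ℕ
  | PSym.zero => 0
  | PSym.quest => 1
  | PSym.one => 2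


lemma psym_univ_filter_one :
    Finset.univ.filter (fun b => ordVal PSym.one ≤ ordVal b) = {PSym.one} := by decide

lemma psym_univ_filter_quest :
    Finset.univ.filter (fun b => ordVal PSym.quest ≤ ordVal b)
      = {PSym.quest, PSym.one} := by decide

lemma psym_univ_filter_zero :
    Finset.univ.filter (fun b => ordVal PSym.zero ≤ ordVal b) = Finset.univ := by decide

lemma ordVal_zero_iff {x : PSym} : ordVal x = 0 ↔ x = PSym.zero := by cases x <;> simp [ordVal]

lemma ordVal_one_of {x : PSym} (h : 2 ≤ ordVal x) : x = PSym.one := by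
  cases x <;> simp [ordVal] at h ⊢

lemma phi_sum (p q : ℝ) (a b c : PSym) :
    phi p q a b c PSym.zero + phi p q a b c PSym.quest + phi p q a b c PSym.one = 1 := by
  cases a <;> cases b <;> cases c <;> simp [phi, lowQ] <;> ring

lemma phi_one (p q : ℝ) (a b c : PSym) :
    phi p q a b c PSym.one
      = if a = PSym.zero ∧ b = PSym.zero ∧ c = PSym.zero then 1 - p else q := by
  cases a <;> cases b <;> cases c <;> simp [phi, lowQ]

lemma phi_zero (p q : ℝ) (a b c : PSym) :
    phi p q a b c PSym.zero
      = if a = PSym.one ∨ b = PSym.one ∨ c = PSym.one then 1 - q else p := by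
  cases a <;> cases b <;> cases c <;> simp [phi, lowQ]

theorem stmt15 (p q : ℝ) (hp0 : 0 ≤ p) (hp1 : p ≤ 1) (hq0 : 0 ≤ q) (hq1 : q ≤ 1)
    (hpq : p + q ≤ 1) (η ηt : Config)
    (hle : ∀ x : ℤ, ordVal (η x) ≤ ordVal (ηt x)) (n : ℤ) (a : PSym) :
    ∑ b ∈ Finset.univ.filter (fun b => ordVal a ≤ ordVal b),
        phi p q (ηt n) (ηt (n + 1)) (ηt (n + 2)) b ≤
      ∑ b ∈ Finset.univ.filter (fun b => ordVal a ≤ ordVal b),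
        phi p q (η n) (η (n + 1)) (η (n + 2)) b := by
  have key : ∀ x, ηt x = PSym.zero → η x = PSym.zero := by
    intro x hx
    have := hle x
    rw [hx] at this
    simpa [ordVal] using ordVal_zero_iff.mp (Nat.le_zero.mp (by simpa [ordVal] using this))
  have key2 : ∀ x, η x = PSym.one → ηt x = PSym.one := by
    intro x hx
    have := hle x
    rw [hx] at this
    exact ordVal_one_of (by simpa [ordVal] using this)
  cases a with
  | zero =>
      rw [psym_univ_filter_zero]
      have h1 : ∑ b : PSym, phi p q (ηt n) (ηt (n+1)) (ηt (n+2)) b = 1 := by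
        rw [show (Finset.univ : Finset PSym) = {PSym.zero, PSym.quest, PSym.one} by decide]
        simp [Finset.sum_insert, Finset.mem_insert]
        linarith [phi_sum p q (ηt n) (ηt (n+1)) (ηt (n+2))]
      have h2 : ∑ b : PSym, phi p q (η n) (η (n+1)) (η (n+2)) b = 1 := by
        rw [show (Finset.univ : Finset PSym) = {PSym.zero, PSym.quest, PSym.one} by decide]
        simp [Finset.sum_insert, Finset.mem_insert]
        linarith [phi_sum p q (η n) (η (n+1)) (η (n+2))]
      rw [h1, h2]
  | one =>
      rw [psym_univ_filter_one]
      simp only [Finset.sum_singleton, phi_one]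
      split_ifs with h1 h2 h2
      · linarith
      · exact absurd ⟨key n h1.1, key (n+1) h1.2.1, key (n+2) h1.2.2⟩ h2
      · linarith
      · linarith
  | quest =>
      rw [psym_univ_filter_quest]
      have e1 := phi_sum p q (ηt n) (ηt (n+1)) (ηt (n+2))
      have e2 := phi_sum p q (η n) (η (n+1)) (η (n+2))
      rw [show ({PSym.quest, PSym.one} : Finset PSym) = insert PSym.quest {PSym.one} from rfl,
        Finset.sum_insert (by decide), Finset.sum_singleton,
        Finset.sum_insert (by decide), Finset.sum_singleton]
      have hz : phi p q (η n) (η (n+1)) (η (n+2)) PSym.zero ≤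
          phi p q (ηt n) (ηt (n+1)) (ηt (n+2)) PSym.zero := by
        rw [phi_zero, phi_zero]
        split_ifs with h1 h2 h2
        · linarith
        · rcases h1 with h | h | h
          · exact absurd (Or.inl (key2 n h)) h2
          · exact absurd (Or.inr (Or.inl (key2 (n+1) h))) h2
          · exact absurd (Or.inr (Or.inr (key2 (n+2) h))) h2
        · linarith
        · linarith
      linarith
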